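/- (Two-Sided Triangle Counting Lemma.) Let P = (X ∪ Y ∪ Z, E_P) be a tripartite graph such that P[X,Y] and P[X,Z] are both (δ,d)-regular, and let X' ⊆ X be a set of size |X'| ≥ δ|X|. Then (d−δ)·d·|X'|·e(P[Y,Z]) − 2δ|X||Y||Z| ≤ |K_3(P, X')| ≤ (d+δ)·d·|X'|·e(P[Y,Z]) + 2δ|X||Y||Z|, where K_3(P, X') denotes the set of triangles of P meeting X'. -/
import Mathlib


open Finset Filter

attribute [local instance] Classical.propDecidable

/-- A hypergraph: a finite vertex set and a finite edge set (edges are finite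
vertex sets; for 3-graphs all edges have three elements). -/
structure H3 where
  verts : Finset ℕ
  edges : Finset (Finset ℕ)

/-- The subhypergraph relation. -/
def H3.Sub (F H : H3) : Prop :=
  F.verts ⊆ H.verts ∧ F.edges ⊆ H.edges ∧ ∀ e ∈ F.edges, e ⊆ F.verts

/-- The density `d₃` of a 3-graph. -/
noncomputable def d3 (F : H3) : ℝ :=
  if F.edges.card = 0 then 0
  else if F.edges.card = 1 ∧ F.verts.card = 3 then 1 / 3
  else ((F.edges.card : ℝ) - 1) / ((F.verts.card : ℝ) - 3)

/-- The maximal 3-density `m₃`. -/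
noncomputable def m3 (H : H3) : ℝ :=
  sSup {x : ℝ | ∃ F : H3, F.Sub H ∧ x = d3 F}

/-- The asymmetric maximal 3-density `m₃(H₁,H₂)`. -/
noncomputable def m3Asym (H1 H2 : H3) : ℝ :=
  sSup {x : ℝ | ∃ F : H3, F.Sub H1 ∧ 1 ≤ F.edges.card ∧
    x = (F.edges.card : ℝ) / ((F.verts.card : ℝ) - 3 + 1 / m3 H2)}

/-- The maximum subhypergraph density `m(H)`. -/
noncomputable def mDen (H : H3) : ℝ :=
  sSup {x : ℝ | ∃ F : H3, F.Sub H ∧ 1 ≤ F.verts.card ∧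
    x = (F.edges.card : ℝ) / (F.verts.card : ℝ)}

/-- The canonical linear 3-clique `K̃_t`: branch vertices `0,…,t-1`; the pair
`(i,j)` with `i<j<t` gets the apex vertex `t + (C(j,2) + i)`, and the map
`(i,j) ↦ C(j,2) + i` is a bijection onto `[0, C(t,2))`. -/
noncomputable def linClique (t : ℕ) : H3 where
  verts := Finset.range (t + t.choose 2)
  edges := ((Finset.range t ×ˢ Finset.range t).filter fun p => p.1 < p.2).image
    fun p => {p.1, p.2, t + (p.2.choose 2 + p.1)}

/-- `v(K̃_t)`. -/
def vOf (t : ℕ) : ℕ := t + t.choose 2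

/-- `(cV, cE)` is a copy of the hypergraph `F` (an isomorphic image of `F`). -/
def IsCopy3 (F : H3) (cV : Finset ℕ) (cE : Finset (Finset ℕ)) : Prop :=
  ∃ φ : ℕ → ℕ, Set.InjOn φ ↑F.verts ∧ cV = F.verts.image φ ∧
    cE = F.edges.image fun e => e.image φ

/-- The edge set `E` contains a copy of the hypergraph `F`. -/
def ContainsCopy (F : H3) (E : Finset (Finset ℕ)) : Prop :=
  ∃ cV cE, IsCopy3 F cV cE ∧ cE ⊆ E

/-- The edge set `E` induced on `U` contains a copy of the hypergraph `F`. -/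
def ContainsCopyWithin (F : H3) (E : Finset (Finset ℕ)) (U : Finset ℕ) : Prop :=
  ∃ cV cE, IsCopy3 F cV cE ∧ cV ⊆ U ∧ cE ⊆ E

/-- The probability that the binomial random 3-graph `ℍ(n,p)` satisfies `P`. -/
noncomputable def PrH (n : ℕ) (p : ℝ) (P : Finset (Finset ℕ) → Prop) : ℝ :=
  ∑ R ∈ ((Finset.range n).powersetCard 3).powerset,
    if P R then p ^ R.card * (1 - p) ^ (((Finset.range n).powersetCard 3).card - R.card)
    else 0

/-- `E → (F)₂` : every 2-colouring of `E` yields a monochromatic copy of `F`. -/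
def Arrow2 (E : Finset (Finset ℕ)) (F : H3) : Prop :=
  ∀ χ : Finset ℕ → Bool, ∃ c : Bool, ContainsCopy F (E.filter fun e => χ e = c)

/-- `E → (F, F')` : every red/blue colouring of `E` yields a red copy of `F`
or a blue copy of `F'`. -/
def ArrowAsym (E : Finset (Finset ℕ)) (F F' : H3) : Prop :=
  ∀ χ : Finset ℕ → Bool,
    ContainsCopy F (E.filter fun e => χ e = true) ∨
    ContainsCopy F' (E.filter fun e => χ e = false)

/-- `H` is `(F,F')`-Ramsey with respect to `(𝓕,𝓕')`. -/
def RamseyWrt (E : Finset (Finset ℕ)) (F F' : H3) (𝓕 𝓕' : Finset (Finset ℕ)) : Prop :=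
  ∀ χ : Finset ℕ → Bool,
    (∃ cV cE, IsCopy3 F cV cE ∧ cE ⊆ E.filter (fun e => χ e = true) ∧ cV ∉ 𝓕) ∨
    (∃ cV cE, IsCopy3 F' cV cE ∧ cE ⊆ E.filter (fun e => χ e = false) ∧ cV ∉ 𝓕')

/-- The complete bipartite graph between `X` and `Y`, as a set of pairs. -/
noncomputable def K2 (X Y : Finset ℕ) : Finset (Finset ℕ) :=
  (X ×ˢ Y).image fun p => ({p.1, p.2} : Finset ℕ)

/-- `e_G(X,Y)` : the number of edges of `G` with one endpoint in `X` and one in `Y`. -/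
noncomputable def e2 (G : Finset (Finset ℕ)) (X Y : Finset ℕ) : ℕ :=
  (G.filter fun e => ∃ x ∈ X, ∃ y ∈ Y, e = {x, y}).card

/-- The graph `G` is `(δ,d)`-regular between `X` and `Y`. -/
def BipRegular (δ d : ℝ) (G : Finset (Finset ℕ)) (X Y : Finset ℕ) : Prop :=
  ∀ X' ⊆ X, ∀ Y' ⊆ Y,
    |(e2 G X' Y' : ℝ) - d * X'.card * Y'.card| ≤ δ * X.card * Y.card

/-- `e_H(X,Y,Z)` : the number of edges of the 3-graph `E` meeting `X`, `Y` and `Z`. -/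
noncomputable def e3 (E : Finset (Finset ℕ)) (X Y Z : Finset ℕ) : ℕ :=
  (E.filter fun e => ∃ x ∈ X, ∃ y ∈ Y, ∃ z ∈ Z, e = {x, y, z}).card

/-- The 3-graph `E` is `(δ,d)`-weakly-regular on `(X,Y,Z)`. -/
def WeakRegularWith (δ d : ℝ) (E : Finset (Finset ℕ)) (X Y Z : Finset ℕ) : Prop :=
  ∀ X' ⊆ X, ∀ Y' ⊆ Y, ∀ Z' ⊆ Z,
    |(e3 E X' Y' Z' : ℝ) - d * X'.card * Y'.card * Z'.card| ≤
      δ * X.card * Y.card * Z.card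

/-- The 3-graph `E` is `δ`-weakly-regular on `(X,Y,Z)`. -/
def WeakRegular (δ : ℝ) (E : Finset (Finset ℕ)) (X Y Z : Finset ℕ) : Prop :=
  WeakRegularWith δ ((e3 E X Y Z : ℝ) / (X.card * Y.card * Z.card)) E X Y Z

/-- The 3-graph `E` is `δ`-weakly-regular with respect to the vertex partition `V`. -/
def WeakRegWrt (δ : ℝ) (E : Finset (Finset ℕ)) {t : ℕ} (V : Fin t → Finset ℕ) : Prop :=
  let bad : Finset (Fin t × Fin t × Fin t) :=
    Finset.univ.filter fun x =>
      x.1 < x.2.1 ∧ x.2.1 < x.2.2 ∧ ¬ WeakRegular δ E (V x.1) (V x.2.1) (V x.2.2)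
  (bad.card : ℝ) ≤ δ * (t.choose 3)

/-- `K_3(G)` on parts `(X,Y,Z)` : the triangles of `G` with one vertex in each part,
as a set of vertex triples. -/
noncomputable def triSets (G : Finset (Finset ℕ)) (X Y Z : Finset ℕ) : Finset (Finset ℕ) :=
  ((X ×ˢ Y ×ˢ Z).filter fun p =>
      ({p.1, p.2.1} : Finset ℕ) ∈ G ∧ ({p.1, p.2.2} : Finset ℕ) ∈ G ∧
        ({p.2.1, p.2.2} : Finset ℕ) ∈ G).image fun p => ({p.1, p.2.1, p.2.2} : Finset ℕ)

/-- The relative density `d(E|P)` of a 3-graph `E` with respect to the tripartite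
graph `P` on parts `(X,Y,Z)`. -/
noncomputable def relDen (E P : Finset (Finset ℕ)) (X Y Z : Finset ℕ) : ℝ :=
  ((E ∩ triSets P X Y Z).card : ℝ) / ((triSets P X Y Z).card : ℝ)

/-- The 3-graph `E` is `(δ,d,r)`-regular with respect to the tripartite graph `P`
on parts `(X,Y,Z)`. -/
def StrongRegular (δ d : ℝ) (r : ℕ) (E P : Finset (Finset ℕ)) (X Y Z : Finset ℕ) : Prop :=
  ∀ Q : Fin r → Finset (Finset ℕ), (∀ i, Q i ⊆ P) →
    δ * ((triSets P X Y Z).card : ℝ)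
        ≤ (((Finset.univ : Finset (Fin r)).biUnion fun i => triSets (Q i) X Y Z).card : ℝ) →
    0 < δ * ((triSets P X Y Z).card : ℝ) →
    |((E ∩ ((Finset.univ : Finset (Fin r)).biUnion fun i => triSets (Q i) X Y Z)).card : ℝ)
        - d * (((Finset.univ : Finset (Fin r)).biUnion fun i => triSets (Q i) X Y Z).card : ℝ)|
      ≤ δ * ((triSets P X Y Z).card : ℝ)

/-- The triad `B^{ijk}_{αβγ}` of a family of bipartite graphs. -/
def triadG {t ℓ : ℕ} (B : Fin t → Fin t → Fin ℓ → Finset (Finset ℕ))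
    (i j k : Fin t) (α β γ : Fin ℓ) : Finset (Finset ℕ) :=
  B i j α ∪ B i k β ∪ B j k γ

/-- The 3-graph `E` is `(δ,r)`-regular with respect to the partition `B` of the
pairs crossing the vertex partition `V` of `[n]`. -/
def StrongRegWrtB (δ : ℝ) (r : ℕ) (E : Finset (Finset ℕ)) {t ℓ : ℕ}
    (V : Fin t → Finset ℕ) (B : Fin t → Fin t → Fin ℓ → Finset (Finset ℕ)) (n : ℕ) : Prop :=
  let bad : Finset ((Fin t × Fin t × Fin t) × Fin ℓ × Fin ℓ × Fin ℓ) :=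
    Finset.univ.filter fun x =>
      x.1.1 < x.1.2.1 ∧ x.1.2.1 < x.1.2.2 ∧
        ¬ StrongRegular δ
          (relDen E (triadG B x.1.1 x.1.2.1 x.1.2.2 x.2.1 x.2.2.1 x.2.2.2)
            (V x.1.1) (V x.1.2.1) (V x.1.2.2))
          r E (triadG B x.1.1 x.1.2.1 x.1.2.2 x.2.1 x.2.2.1 x.2.2.2)
          (V x.1.1) (V x.1.2.1) (V x.1.2.2)
  ((bad.biUnion fun x =>
      triSets (triadG B x.1.1 x.1.2.1 x.1.2.2 x.2.1 x.2.2.1 x.2.2.2)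
        (V x.1.1) (V x.1.2.1) (V x.1.2.2)).card : ℝ) ≤ δ * (n : ℝ) ^ 3

/-- The joint link graph `⋂_{j} L_H(x_j, P)` of a tuple `x`, supported on the
bipartite part of `P` between `Y` and `Z`. -/
noncomputable def jointLink (EH P : Finset (Finset ℕ)) (Y Z : Finset ℕ) {t : ℕ}
    (x : Fin t → ℕ) : Finset (Finset ℕ) :=
  P.filter fun e => (∃ y ∈ Y, ∃ z ∈ Z, e = {y, z}) ∧ ∀ j : Fin t, insert (x j) e ∈ EH

/-- The joint link graph `L_H(X) = ⋂_{x ∈ X} L_H(x)` of a set `X` of vertices of a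
3-graph on `[n]`. -/
noncomputable def jointLinkSet (n : ℕ) (E : Finset (Finset ℕ)) (X : Finset ℕ) :
    Finset (Finset ℕ) :=
  ((Finset.range n).powersetCard 2).filter fun q => ∀ x ∈ X, insert x q ∈ E

/-- The complete tripartite 3-graph on parts `V1`, `V2`, `V3`. -/
noncomputable def tripartiteEdges (V1 V2 V3 : Finset ℕ) : Finset (Finset ℕ) :=
  (V1 ×ˢ V2 ×ˢ V3).image fun p => ({p.1, p.2.1, p.2.2} : Finset ℕ)

/-- The minimum 1-degree `δ₁` of a 3-graph on `[n]`. -/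
noncomputable def minDeg1 (n : ℕ) (E : Finset (Finset ℕ)) : ℕ :=
  if h : ((Finset.range n).image fun v => (E.filter fun e => v ∈ e).card).Nonempty then
    ((Finset.range n).image fun v => (E.filter fun e => v ∈ e).card).min' h
  else 0

/-- `(cV, cE)` is a copy of the graph `(KV, KE)` (an isomorphic image). -/
def IsCopy2 (KV : Finset ℕ) (KE : Finset (Finset ℕ))
    (cV : Finset ℕ) (cE : Finset (Finset ℕ)) : Prop :=
  ∃ φ : ℕ → ℕ, Set.InjOn φ ↑KV ∧ cV = KV.image φ ∧ cE = KE.image fun e => e.image φ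

/-- indicator of an edge -/
noncomputable def indE (P : Finset (Finset ℕ)) (u v : ℕ) : ℝ :=
  if ({u, v} : Finset ℕ) ∈ P then 1 else 0

lemma indE_nonneg (P : Finset (Finset ℕ)) (u v : ℕ) : 0 ≤ indE P u v := by
  unfold indE; split <;> norm_num

lemma indE_le_one (P : Finset (Finset ℕ)) (u v : ℕ) : indE P u v ≤ 1 := by
  unfold indE; split <;> norm_num

lemma pair_eq_of_disjoint {A B : Finset ℕ} (hAB : Disjoint A B)
    {a b c e : ℕ} (ha : a ∈ A) (hb : b ∈ B) (hc : c ∈ A) (he : e ∈ B)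
    (h : ({a, b} : Finset ℕ) = {c, e}) : a = c ∧ b = e := by
  have h1 : a ∈ ({c, e} : Finset ℕ) := h ▸ by simp
  have h2 : b ∈ ({c, e} : Finset ℕ) := h ▸ by simp
  simp only [mem_insert, mem_singleton] at h1 h2
  have hac : a = c := by
    rcases h1 with h1 | h1
    · exact h1
    · exact absurd (h1 ▸ ha) (disjoint_right.mp hAB he)
  refine ⟨hac, ?_⟩
  rcases h2 with h2 | h2
  · exact absurd (h2 ▸ hb) (disjoint_left.mp hAB hc)
  · exact h2

lemma e2_eq_sum (P : Finset (Finset ℕ)) {A B : Finset ℕ} (hAB : Disjoint A B) :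
    (e2 P A B : ℝ) = ∑ a ∈ A, ∑ b ∈ B, indE P a b := by
  classical
  have key : ((A ×ˢ B).filter fun p => ({p.1, p.2} : Finset ℕ) ∈ P).card
      = (P.filter fun e => ∃ x ∈ A, ∃ y ∈ B, e = {x, y}).card := by
    apply card_bij (fun p _ => ({p.1, p.2} : Finset ℕ))
    · intro p hp
      simp only [mem_filter, mem_product] at hp ⊢
      exact ⟨hp.2, p.1, hp.1.1, p.2, hp.1.2, rfl⟩
    · intro p hp q hq h
      simp only [mem_filter, mem_product] at hp hq
      have := pair_eq_of_disjoint hAB hp.1.1 hp.1.2 hq.1.1 hq.1.2 h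
      exact Prod.ext this.1 this.2
    · intro e he
      simp only [mem_filter] at he
      obtain ⟨heP, x, hx, y, hy, rfl⟩ := he
      exact ⟨(x, y), by simp [mem_filter, mem_product, hx, hy, heP], rfl⟩
  rw [e2, ← key, card_filter, sum_product]
  push_cast
  refine Finset.sum_congr rfl fun a _ => Finset.sum_congr rfl fun b _ => ?_
  unfold indE
  split <;> simp_all

lemma triple_eq_of_disjoint {A B C : Finset ℕ} (hAB : Disjoint A B) (hAC : Disjoint A C)
    (hBC : Disjoint B C) {a b c a' b' c' : ℕ} (ha : a ∈ A) (hb : b ∈ B) (hc : c ∈ C)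
    (ha' : a' ∈ A) (hb' : b' ∈ B) (hc' : c' ∈ C)
    (h : ({a, b, c} : Finset ℕ) = {a', b', c'}) : a = a' ∧ b = b' ∧ c = c' := by
  have h1 : a ∈ ({a', b', c'} : Finset ℕ) := h ▸ by simp
  have h2 : b ∈ ({a', b', c'} : Finset ℕ) := h ▸ by simp
  have h3 : c ∈ ({a', b', c'} : Finset ℕ) := h ▸ by simp
  simp only [mem_insert, mem_singleton] at h1 h2 h3
  refine ⟨?_, ?_, ?_⟩
  · rcases h1 with h | h | h
    · exact h
    · exact absurd (h ▸ ha) (disjoint_right.mp hAB hb')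
    · exact absurd (h ▸ ha) (disjoint_right.mp hAC hc')
  · rcases h2 with h | h | h
    · exact absurd (h ▸ hb) (disjoint_left.mp hAB ha')
    · exact h
    · exact absurd (h ▸ hb) (disjoint_right.mp hBC hc')
  · rcases h3 with h | h | h
    · exact absurd (h ▸ hc) (disjoint_left.mp hAC ha')
    · exact absurd (h ▸ hc) (disjoint_left.mp hBC hb')
    · exact h

lemma tri_eq_sum (G : Finset (Finset ℕ)) (A B C : Finset ℕ) (hAB : Disjoint A B)
    (hAC : Disjoint A C) (hBC : Disjoint B C) :
    ((triSets G A B C).card : ℝ) = ∑ x ∈ A, ∑ y ∈ B, ∑ z ∈ C,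
      indE G x y * indE G x z * indE G y z := by
  classical
  rw [triSets, card_image_of_injOn]
  · rw [card_filter, sum_product]
    push_cast
    refine Finset.sum_congr rfl fun x _ => ?_
    rw [sum_product]
    refine Finset.sum_congr rfl fun y _ => Finset.sum_congr rfl fun z _ => ?_
    unfold indE
    by_cases h1 : ({x, y} : Finset ℕ) ∈ G <;> by_cases h2 : ({x, z} : Finset ℕ) ∈ G <;>
      by_cases h3 : ({y, z} : Finset ℕ) ∈ G <;> simp [h1, h2, h3]
  · intro p hp q hq h
    simp only [coe_filter, Set.mem_setOf_eq, mem_product] at hp hq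
    obtain ⟨⟨hpa, hpb, hpc⟩, -⟩ := hp
    obtain ⟨⟨hqa, hqb, hqc⟩, -⟩ := hq
    obtain ⟨h1, h2, h3⟩ := triple_eq_of_disjoint hAB hAC hBC hpa hpb hpc hqa hqb hqc h
    exact Prod.ext h1 (Prod.ext h2 h3)

set_option maxHeartbeats 1600000 in
/-- (Two-Sided Triangle Counting Lemma.) -/
theorem two_sided_triangle_counting (δ d : ℝ) (X Y Z X' : Finset ℕ)
    (P : Finset (Finset ℕ))
    (hXY : Disjoint X Y) (hXZ : Disjoint X Z) (hYZ : Disjoint Y Z)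
    (hP : ∀ e ∈ P, e ∈ K2 X Y ∨ e ∈ K2 X Z ∨ e ∈ K2 Y Z)
    (hregXY : BipRegular δ d P X Y) (hregXZ : BipRegular δ d P X Z)
    (hX'sub : X' ⊆ X) (hX'card : δ * X.card ≤ (X'.card : ℝ)) :
    (d - δ) * d * X'.card * (e2 P Y Z : ℝ) - 2 * δ * X.card * Y.card * Z.card
        ≤ ((triSets P X' Y Z).card : ℝ) ∧
      ((triSets P X' Y Z).card : ℝ)
        ≤ (d + δ) * d * X'.card * (e2 P Y Z : ℝ) + 2 * δ * X.card * Y.card * Z.card := by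
  classical
  -- degenerate cases
  rcases X.eq_empty_or_nonempty with hXe | hXne
  · have hX' : X' = ∅ := subset_empty.mp (hXe ▸ hX'sub)
    have ht : triSets P X' Y Z = ∅ := by simp [triSets, hX']
    rw [ht, hX', hXe]
    simp
  rcases Y.eq_empty_or_nonempty with hYe | hYne
  · have ht : triSets P X' Y Z = ∅ := by simp [triSets, hYe]
    have he : e2 P Y Z = 0 := by simp [e2, hYe]
    rw [ht, he, hYe]
    simp
  rcases Z.eq_empty_or_nonempty with hZe | hZne
  · have ht : triSets P X' Y Z = ∅ := by simp [triSets, hZe]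
    have he : e2 P Y Z = 0 := by simp [e2, hZe]
    rw [ht, he, hZe]
    simp
  -- nondegenerate case
  have hXpos : (0 : ℝ) < X.card := by exact_mod_cast card_pos.mpr hXne
  have hYpos : (0 : ℝ) < Y.card := by exact_mod_cast card_pos.mpr hYne
  have hZpos : (0 : ℝ) < Z.card := by exact_mod_cast card_pos.mpr hZne
  have hX'Y : Disjoint X' Y := disjoint_of_subset_left hX'sub hXY
  have hX'Z : Disjoint X' Z := disjoint_of_subset_left hX'sub hXZ
  -- basic bounds on δ and d
  have hδ0 : 0 ≤ δ := by
    have h0 : e2 P (∅ : Finset ℕ) ∅ = 0 := by simp [e2]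
    have := hregXY ∅ (empty_subset X) ∅ (empty_subset Y)
    rw [h0] at this
    simp only [card_empty, Nat.cast_zero, mul_zero, sub_zero, abs_zero] at this
    nlinarith [mul_pos hXpos hYpos]
  have hδ1 : δ ≤ 1 := by
    have hxle : (X'.card : ℝ) ≤ X.card := by exact_mod_cast card_le_card hX'sub
    nlinarith
  have he2top : (e2 P X Y : ℝ) ≤ X.card * Y.card := by
    rw [e2_eq_sum P hXY]
    calc ∑ a ∈ X, ∑ b ∈ Y, indE P a b ≤ ∑ a ∈ X, ∑ b ∈ Y, (1 : ℝ) :=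
          Finset.sum_le_sum fun a _ => Finset.sum_le_sum fun b _ => indE_le_one P a b
      _ = X.card * Y.card := by simp [mul_comm]
  have he2nn : (0 : ℝ) ≤ (e2 P X Y : ℝ) := Nat.cast_nonneg _
  have hfull := abs_le.mp (hregXY X Subset.rfl Y Subset.rfl)
  have hd1 : -δ ≤ d := by nlinarith [hfull.1, mul_pos hXpos hYpos]
  have hd2 : d ≤ 1 + δ := by nlinarith [hfull.2, mul_pos hXpos hYpos]
  -- regularity in summation form
  have regXZ' : ∀ A ⊆ X, ∀ B ⊆ Z,
      |(∑ x ∈ A, ∑ z ∈ B, indE P x z) - d * A.card * B.card| ≤ δ * X.card * Z.card := by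
    intro A hA B hB
    rw [← e2_eq_sum P (hXZ.mono hA hB)]
    exact hregXZ A hA B hB
  have regXY' : ∀ A ⊆ X, ∀ B ⊆ Y,
      |(∑ x ∈ A, ∑ y ∈ B, indE P x y) - d * A.card * B.card| ≤ δ * X.card * Y.card := by
    intro A hA B hB
    rw [← e2_eq_sum P (hXY.mono hA hB)]
    exact hregXY A hA B hB
  -- neighbourhood sets
  set Ay : ℕ → Finset ℕ := fun y => X'.filter fun x => ({x, y} : Finset ℕ) ∈ P with hAydef
  set By : ℕ → Finset ℕ := fun y => Z.filter fun z => ({y, z} : Finset ℕ) ∈ P with hBydef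
  set Yz : ℕ → Finset ℕ := fun z => Y.filter fun y => ({y, z} : Finset ℕ) ∈ P with hYzdef
  set S : ℝ := ∑ y ∈ Y, ((Ay y).card : ℝ) * ((By y).card : ℝ) with hSdef
  set T : ℝ := ((triSets P X' Y Z).card : ℝ) with hTdef
  set Ar : ℝ := (e2 P Y Z : ℝ) with hArdef
  -- card identities
  have hcardAy : ∀ y, ((Ay y).card : ℝ) = ∑ x ∈ X', indE P x y := by
    intro y
    rw [hAydef, card_filter, Nat.cast_sum]
    refine Finset.sum_congr rfl fun x _ => ?_
    unfold indE; split <;> simp_all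
  have hcardBy : ∀ y, ((By y).card : ℝ) = ∑ z ∈ Z, indE P y z := by
    intro y
    rw [hBydef, card_filter, Nat.cast_sum]
    refine Finset.sum_congr rfl fun z _ => ?_
    unfold indE; split <;> simp_all
  have hcardYz : ∀ z, ((Yz z).card : ℝ) = ∑ y ∈ Y, indE P y z := by
    intro z
    rw [hYzdef, card_filter, Nat.cast_sum]
    refine Finset.sum_congr rfl fun y _ => ?_
    unfold indE; split <;> simp_all
  -- T as a double sum over neighbourhoods
  have hT : T = ∑ y ∈ Y, ∑ x ∈ Ay y, ∑ z ∈ By y, indE P x z := by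
    rw [hTdef, tri_eq_sum P X' Y Z hX'Y hX'Z hYZ, Finset.sum_comm]
    refine Finset.sum_congr rfl fun y _ => ?_
    rw [hAydef]
    rw [Finset.sum_filter]
    refine Finset.sum_congr rfl fun x _ => ?_
    rw [hBydef, Finset.sum_filter]
    unfold indE
    by_cases h1 : ({x, y} : Finset ℕ) ∈ P
    · simp only [h1, if_true, one_mul]
      refine Finset.sum_congr rfl fun z _ => ?_
      by_cases h3 : ({y, z} : Finset ℕ) ∈ P <;> simp [h3]
    · simp [h1]
  -- |T - d S| ≤ δ X Y Z
  have h1 : |T - d * S| ≤ δ * X.card * Y.card * Z.card := by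
    rw [hT, hSdef, Finset.mul_sum, ← Finset.sum_sub_distrib]
    calc |∑ y ∈ Y, ((∑ x ∈ Ay y, ∑ z ∈ By y, indE P x z) -
            d * (((Ay y).card : ℝ) * ((By y).card : ℝ)))|
        ≤ ∑ y ∈ Y, |(∑ x ∈ Ay y, ∑ z ∈ By y, indE P x z) -
            d * (((Ay y).card : ℝ) * ((By y).card : ℝ))| := Finset.abs_sum_le_sum_abs _ _
      _ ≤ ∑ y ∈ Y, δ * X.card * Z.card := by
          refine Finset.sum_le_sum fun y _ => ?_
          have := regXZ' (Ay y) (by rw [hAydef]; exact (filter_subset _ _).trans hX'sub)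
            (By y) (by rw [hBydef]; exact filter_subset _ _)
          calc |(∑ x ∈ Ay y, ∑ z ∈ By y, indE P x z) -
                d * (((Ay y).card : ℝ) * ((By y).card : ℝ))|
              = |(∑ x ∈ Ay y, ∑ z ∈ By y, indE P x z) -
                d * ((Ay y).card : ℝ) * ((By y).card : ℝ)| := by ring_nf
            _ ≤ δ * X.card * Z.card := this
      _ = δ * X.card * Y.card * Z.card := by
          rw [Finset.sum_const, nsmul_eq_mul]; ring
  -- S rewritten as sums over z
  have hS_alt : S = ∑ z ∈ Z, ∑ y ∈ Yz z, ((Ay y).card : ℝ) := by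
    rw [hSdef]
    calc ∑ y ∈ Y, ((Ay y).card : ℝ) * ((By y).card : ℝ)
        = ∑ y ∈ Y, ∑ z ∈ Z, ((Ay y).card : ℝ) * indE P y z := by
          refine Finset.sum_congr rfl fun y _ => ?_
          rw [hcardBy y, Finset.mul_sum]
      _ = ∑ z ∈ Z, ∑ y ∈ Y, ((Ay y).card : ℝ) * indE P y z := Finset.sum_comm
      _ = ∑ z ∈ Z, ∑ y ∈ Yz z, ((Ay y).card : ℝ) := by
          refine Finset.sum_congr rfl fun z _ => ?_
          rw [hYzdef, Finset.sum_filter]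
          refine Finset.sum_congr rfl fun y _ => ?_
          unfold indE
          by_cases h : ({y, z} : Finset ℕ) ∈ P <;> simp [h]
  have hAr : Ar = ∑ z ∈ Z, ((Yz z).card : ℝ) := by
    rw [hArdef, e2_eq_sum P hYZ, Finset.sum_comm]
    exact (Finset.sum_congr rfl fun z _ => (hcardYz z).symm)
  -- |S - d |X'| Ar| ≤ δ X Y Z
  have h2 : |S - d * (X'.card : ℝ) * Ar| ≤ δ * X.card * Y.card * Z.card := by
    have key : S - d * (X'.card : ℝ) * Ar
        = ∑ z ∈ Z, ((∑ x ∈ X', ∑ y ∈ Yz z, indE P x y)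
            - d * (X'.card : ℝ) * ((Yz z).card : ℝ)) := by
      rw [hS_alt, hAr, Finset.mul_sum, ← Finset.sum_sub_distrib]
      refine Finset.sum_congr rfl fun z _ => ?_
      have : ∑ y ∈ Yz z, ((Ay y).card : ℝ) = ∑ x ∈ X', ∑ y ∈ Yz z, indE P x y := by
        rw [Finset.sum_comm]
        exact Finset.sum_congr rfl fun y _ => hcardAy y
      rw [this]
    rw [key]
    calc |∑ z ∈ Z, ((∑ x ∈ X', ∑ y ∈ Yz z, indE P x y)
            - d * (X'.card : ℝ) * ((Yz z).card : ℝ))|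
        ≤ ∑ z ∈ Z, |(∑ x ∈ X', ∑ y ∈ Yz z, indE P x y)
            - d * (X'.card : ℝ) * ((Yz z).card : ℝ)| := Finset.abs_sum_le_sum_abs _ _
      _ ≤ ∑ z ∈ Z, δ * X.card * Y.card := by
          refine Finset.sum_le_sum fun z _ => ?_
          exact regXY' X' hX'sub (Yz z) (by rw [hYzdef]; exact filter_subset _ _)
      _ = δ * X.card * Y.card * Z.card := by
          rw [Finset.sum_const, nsmul_eq_mul]; ring
  -- simple bounds
  have hT0 : 0 ≤ T := by rw [hTdef]; positivity
  have hS0 : 0 ≤ S := by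
    rw [hSdef]
    exact Finset.sum_nonneg fun y _ => mul_nonneg (Nat.cast_nonneg _) (Nat.cast_nonneg _)
  have hTS : T ≤ S := by
    rw [hT, hSdef]
    refine Finset.sum_le_sum fun y _ => ?_
    calc ∑ x ∈ Ay y, ∑ z ∈ By y, indE P x z
        ≤ ∑ x ∈ Ay y, ∑ z ∈ By y, (1 : ℝ) :=
          Finset.sum_le_sum fun x _ => Finset.sum_le_sum fun z _ => indE_le_one P x z
      _ = ((Ay y).card : ℝ) * ((By y).card : ℝ) := by simp [mul_comm]
  have hSa : S ≤ (X'.card : ℝ) * Ar := by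
    rw [hS_alt, hAr, Finset.mul_sum]
    refine Finset.sum_le_sum fun z _ => ?_
    calc ∑ y ∈ Yz z, ((Ay y).card : ℝ)
        ≤ ∑ y ∈ Yz z, (X'.card : ℝ) := by
          refine Finset.sum_le_sum fun y _ => ?_
          exact_mod_cast card_le_card (by rw [hAydef]; exact filter_subset _ _)
      _ = (X'.card : ℝ) * ((Yz z).card : ℝ) := by
          rw [Finset.sum_const, nsmul_eq_mul]; ring
  have hx0 : (0 : ℝ) ≤ (X'.card : ℝ) := Nat.cast_nonneg _
  have hA0 : (0 : ℝ) ≤ Ar := by rw [hArdef]; positivity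
  have hxle : (X'.card : ℝ) ≤ X.card := by exact_mod_cast card_le_card hX'sub
  have hAle : Ar ≤ Y.card * Z.card := by
    rw [hArdef, e2_eq_sum P hYZ]
    calc ∑ y ∈ Y, ∑ z ∈ Z, indE P y z ≤ ∑ y ∈ Y, ∑ z ∈ Z, (1 : ℝ) :=
          Finset.sum_le_sum fun y _ => Finset.sum_le_sum fun z _ => indE_le_one P y z
      _ = Y.card * Z.card := by simp [mul_comm]
  have hprod : (X'.card : ℝ) * Ar ≤ X.card * Y.card * Z.card := by
    calc (X'.card : ℝ) * Ar ≤ (X.card : ℝ) * (Y.card * Z.card) :=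
          mul_le_mul hxle hAle hA0 (le_of_lt hXpos)
      _ = X.card * Y.card * Z.card := by ring
  obtain ⟨h1a, h1b⟩ := abs_le.mp h1
  obtain ⟨h2a, h2b⟩ := abs_le.mp h2
  constructor
  · -- lower bound
    show (d - δ) * d * X'.card * Ar - 2 * δ * X.card * Y.card * Z.card ≤ T
    rcases le_or_gt d 0 with hd | hd
    · nlinarith [mul_nonneg hx0 hA0, mul_nonneg (mul_nonneg hδ0 hδ0)
        (sub_nonneg.mpr hprod), mul_nonneg (mul_nonneg (neg_nonneg.mpr hd)
        (by linarith : 0 ≤ d + δ)) (mul_nonneg hx0 hA0),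
        mul_nonneg hδ0 (mul_nonneg hx0 hA0)]
    rcases le_or_gt d 1 with hd' | hd'
    · nlinarith [mul_nonneg hd.le (by linarith [h2a] :
        0 ≤ S - d * (X'.card : ℝ) * Ar + δ * X.card * Y.card * Z.card),
        mul_nonneg hδ0 (mul_nonneg hx0 hA0),
        mul_nonneg (mul_nonneg hδ0 (by linarith : (0:ℝ) ≤ 1 - d))
          (by positivity : (0:ℝ) ≤ (X.card : ℝ) * Y.card * Z.card)]
    · rcases le_or_gt ((d - 1) * (X.card * Y.card * Z.card)) (d * ((X'.card : ℝ) * Ar))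
        with hc | hc
      · nlinarith [mul_nonneg (by linarith : (0:ℝ) ≤ d) (by linarith [h2a] :
          0 ≤ S - d * (X'.card : ℝ) * Ar + δ * X.card * Y.card * Z.card), hδ0,
          mul_nonneg hδ0 (sub_nonneg.mpr hc)]
      · have hda : d * ((X'.card : ℝ) * Ar) ≤ δ * (X.card * Y.card * Z.card) := by
          nlinarith [mul_pos (mul_pos hXpos hYpos) hZpos]
        nlinarith [hT0, mul_nonneg hx0 hA0, mul_nonneg (mul_nonneg hδ0 hδ0)
          (mul_nonneg hx0 hA0), mul_nonneg hδ0 (mul_nonneg hx0 hA0),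
          mul_pos (mul_pos hXpos hYpos) hZpos,
          mul_nonneg (by linarith : (0:ℝ) ≤ 1 + δ - d) (mul_nonneg hx0 hA0)]
  · -- upper bound
    show T ≤ (d + δ) * d * X'.card * Ar + 2 * δ * X.card * Y.card * Z.card
    rcases le_or_gt d 0 with hd | hd
    · nlinarith [mul_nonpos_of_nonpos_of_nonneg hd hS0, sq_nonneg (2 * d + δ),
        mul_nonneg hx0 hA0, hprod, mul_nonneg (mul_nonneg hδ0 hδ0)
          (sub_nonneg.mpr hprod),
        mul_nonneg (sq_nonneg (2 * d + δ)) (mul_nonneg hx0 hA0)]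
    rcases le_or_gt d 1 with hd' | hd'
    · nlinarith [mul_nonneg hd.le (by linarith [h2b] :
        0 ≤ d * (X'.card : ℝ) * Ar + δ * X.card * Y.card * Z.card - S),
        mul_nonneg hδ0 (mul_nonneg hx0 hA0),
        mul_nonneg (mul_nonneg hδ0 (by linarith : (0:ℝ) ≤ 1 - d))
          (by positivity : (0:ℝ) ≤ (X.card : ℝ) * Y.card * Z.card),
        mul_nonneg (mul_nonneg hd.le hδ0) (mul_nonneg hx0 hA0)]
    · nlinarith [hTS, hSa, mul_nonneg (mul_nonneg hδ0 hd.le) (mul_nonneg hx0 hA0),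
        mul_nonneg hδ0 (le_of_lt (mul_pos (mul_pos hXpos hYpos) hZpos)),
        mul_nonneg (mul_nonneg (by linarith : (0:ℝ) ≤ d - 1) (by linarith : (0:ℝ) ≤ d + 1))
          (mul_nonneg hx0 hA0)]
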